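/- arXiv:1602.00257 — 4 statements merged into one kernel-verified Lean document; each statement's English description precedes it below -/
import Mathlib

section
/- Let g be the heat kernel in dimension d, and let 0 < p < 1 + 2/d and a ≥ 0. Then for all t > 0 and x ∈ ℝ^d, the integral ∫₀^t ∫_{ℝ^d} g(t-s, x-y)^p |y|^a dy ds is finite. -/
open MeasureTheory Real

set_option maxHeartbeats 1000000

lemma gauss_integrable (d : ℕ) {β : ℝ} (hβ : 0 < β) :
    Integrable (fun z : EuclideanSpace ℝ (Fin d) => exp (-β * ‖z‖ ^ 2)) := by
  have h := GaussianFourier.integrable_cexp_neg_mul_sq_norm_add (V := EuclideanSpace ℝ (Fin d))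
    (b := (β : ℂ)) (by simpa using hβ) 0 (0 : EuclideanSpace ℝ (Fin d))
  have h2 := h.norm
  refine h2.congr (Filter.Eventually.of_forall fun z => ?_)
  simp [Complex.norm_exp, ← Complex.ofReal_pow]

lemma gauss_lint (d : ℕ) {β : ℝ} (hβ : 0 < β) :
    ∫⁻ z : EuclideanSpace ℝ (Fin d), ENNReal.ofReal (exp (-β * ‖z‖ ^ 2))
      = ENNReal.ofReal ((π / β) ^ ((d : ℝ) / 2)) := by
  rw [← ofReal_integral_eq_lintegral_ofReal (gauss_integrable d hβ)
    (Filter.Eventually.of_forall fun z => (exp_pos _).le)]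
  rw [GaussianFourier.integral_rexp_neg_mul_sq_norm hβ, finrank_euclideanSpace_fin]


/-- For `0 < p < 1 + 2/d` and `a ≥ 0`, the integral
`∫₀ᵗ ∫_{ℝ^d} g(t-s, x-y)^p |y|^a dy ds` is finite. -/
theorem heat_kernel_power_poly_integrable (d : ℕ) (hd : 1 ≤ d)
    (g : ℝ → EuclideanSpace ℝ (Fin d) → ℝ)
    (hg : ∀ t x, g t x = if 0 < t then (4 * π * t) ^ (-(d : ℝ) / 2) * exp (-‖x‖ ^ 2 / (4 * t))
      else 0)
    (p : ℝ) (hp : 0 < p) (hp' : p < 1 + 2 / d) (a : ℝ) (ha : 0 ≤ a)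
    (t : ℝ) (ht : 0 < t) (x : EuclideanSpace ℝ (Fin d)) :
    ∫⁻ s in Set.Ioc (0 : ℝ) t, ∫⁻ y : EuclideanSpace ℝ (Fin d),
      ENNReal.ofReal (g (t - s) (x - y) ^ p * ‖y‖ ^ a) < ⊤ := by
  have hd0 : (0 : ℝ) < d := by exact_mod_cast Nat.lt_of_lt_of_le Nat.zero_lt_one hd
  set c : ℝ := ‖x‖ with hc
  have hc0 : 0 ≤ c := norm_nonneg _
  set b₀ : ℝ := p / (4 * t) with hb₀def
  have hb₀ : 0 < b₀ := by positivity
  set q : ℝ := -(d : ℝ) / 2 * p with hq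
  set e : ℝ := q + (d : ℝ) / 2 with he
  have he1 : -1 < e := by
    have h1 : p * (d : ℝ) < (1 + 2 / d) * d := mul_lt_mul_of_pos_right hp' hd0
    have h3 : (1 + 2 / (d : ℝ)) * d = d + 2 := by field_simp
    rw [he, hq]
    nlinarith
  set K₁ : ℝ := (c + 1) ^ a * exp (a ^ 2 / (2 * b₀)) with hK₁
  have hK₁0 : 0 ≤ K₁ := by positivity
  set K : ℝ := (4 * π) ^ q * K₁ * (8 * π / p) ^ ((d : ℝ) / 2) with hK
  have hK0 : 0 ≤ K := by positivity
  have main : ∀ s ∈ Set.Ioc (0 : ℝ) t,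
      (∫⁻ y : EuclideanSpace ℝ (Fin d),
        ENNReal.ofReal (g (t - s) (x - y) ^ p * ‖y‖ ^ a))
        ≤ ENNReal.ofReal (K * (t - s) ^ e) := by
    rintro s ⟨hs0, hst⟩
    rcases eq_or_lt_of_le hst with rfl | hslt
    · -- s = t
      simp only [sub_self]
      have h0 : (fun y : EuclideanSpace ℝ (Fin d) =>
          ENNReal.ofReal (g 0 (x - y) ^ p * ‖y‖ ^ a)) = fun _ => 0 := by
        funext y
        rw [hg]
        simp [Real.zero_rpow hp.ne']
      rw [h0, lintegral_zero]
      exact zero_le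
    · set τ : ℝ := t - s with hτdef
      have hτ : 0 < τ := by rw [hτdef]; linarith
      have hτt : τ ≤ t := by rw [hτdef]; linarith
      set b : ℝ := p / (4 * τ) with hbdef
      have hb : 0 < b := by positivity
      have hbb : b₀ ≤ b := by
        rw [hbdef, hb₀def]
        rw [div_le_div_iff₀ (by positivity) (by positivity)]
        nlinarith [hp.le]
      set C₂ : ℝ := (4 * π) ^ q * τ ^ q * K₁ with hC₂
      have hC₂0 : 0 ≤ C₂ := by positivity
      have key : ∀ y : EuclideanSpace ℝ (Fin d),
          g τ (x - y) ^ p * ‖y‖ ^ a ≤ C₂ * exp (-(b / 2) * ‖y - x‖ ^ 2) := by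
        intro y
        rw [hg, if_pos hτ]
        set r : ℝ := ‖y - x‖ with hr
        have hr0 : 0 ≤ r := norm_nonneg _
        have hxy : ‖x - y‖ = r := by rw [hr, norm_sub_rev]
        rw [hxy]
        have h4πτ : (0 : ℝ) ≤ 4 * π * τ := by positivity
        have hargeq : -r ^ 2 / (4 * τ) * p = -(b * r ^ 2) := by rw [hbdef]; field_simp
        have e1 : ((4 * π * τ) ^ (-(d : ℝ) / 2) * exp (-r ^ 2 / (4 * τ))) ^ p
            = (4 * π) ^ q * τ ^ q * exp (-(b * r ^ 2)) := by
          rw [Real.mul_rpow (Real.rpow_nonneg h4πτ _) (exp_pos _).le,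
            ← Real.rpow_mul h4πτ, ← Real.exp_mul, hargeq, ← hq,
            Real.mul_rpow (by positivity) hτ.le]
        rw [e1]
        have h2 : ‖y‖ ^ a ≤ (c + r) ^ a := by
          apply Real.rpow_le_rpow (norm_nonneg _) _ ha
          have := norm_sub_norm_le y x
          rw [← hr, ← hc] at this
          linarith
        have h3 : (c + r) ^ a ≤ (c + 1) ^ a * exp (a * r) := by
          have h31 : c + r ≤ (c + 1) * (1 + r) := by nlinarith
          calc (c + r) ^ a ≤ ((c + 1) * (1 + r)) ^ a :=
                Real.rpow_le_rpow (by positivity) h31 ha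
            _ = (c + 1) ^ a * (1 + r) ^ a := Real.mul_rpow (by positivity) (by positivity)
            _ ≤ (c + 1) ^ a * (exp r) ^ a := by
                gcongr
                all_goals first | positivity | linarith [Real.add_one_le_exp r]
            _ = (c + 1) ^ a * exp (r * a) := by rw [← Real.exp_mul]
            _ = (c + 1) ^ a * exp (a * r) := by rw [mul_comm r a]
        have hq2 : a * r - b / 2 * r ^ 2 ≤ a ^ 2 / (2 * b) := by
          rw [le_div_iff₀ (by positivity)]
          nlinarith [sq_nonneg (b * r - a)]
        have hq3 : a ^ 2 / (2 * b) ≤ a ^ 2 / (2 * b₀) := by gcongr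
        have est : exp (-(b * r ^ 2)) * ‖y‖ ^ a ≤ K₁ * exp (-(b / 2) * r ^ 2) := by
          calc exp (-(b * r ^ 2)) * ‖y‖ ^ a
              ≤ exp (-(b * r ^ 2)) * ((c + 1) ^ a * exp (a * r)) :=
                mul_le_mul_of_nonneg_left (h2.trans h3) (exp_pos _).le
            _ = (c + 1) ^ a * exp (a * r - b * r ^ 2) := by
                rw [show a * r - b * r ^ 2 = a * r + -(b * r ^ 2) by ring, Real.exp_add]
                ring
            _ ≤ (c + 1) ^ a * exp (a ^ 2 / (2 * b₀) + -(b / 2) * r ^ 2) := by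
                apply mul_le_mul_of_nonneg_left _ (by positivity)
                apply Real.exp_le_exp.mpr
                nlinarith
            _ = K₁ * exp (-(b / 2) * r ^ 2) := by
                rw [hK₁, Real.exp_add]; ring
        calc (4 * π) ^ q * τ ^ q * exp (-(b * r ^ 2)) * ‖y‖ ^ a
            = ((4 * π) ^ q * τ ^ q) * (exp (-(b * r ^ 2)) * ‖y‖ ^ a) := by ring
          _ ≤ ((4 * π) ^ q * τ ^ q) * (K₁ * exp (-(b / 2) * r ^ 2)) :=
              mul_le_mul_of_nonneg_left est (by positivity)
          _ = C₂ * exp (-(b / 2) * r ^ 2) := by rw [hC₂]; ring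
      calc (∫⁻ y : EuclideanSpace ℝ (Fin d),
            ENNReal.ofReal (g (t - s) (x - y) ^ p * ‖y‖ ^ a))
          ≤ ∫⁻ y : EuclideanSpace ℝ (Fin d),
              ENNReal.ofReal (C₂ * exp (-(b / 2) * ‖y - x‖ ^ 2)) :=
            lintegral_mono fun y => ENNReal.ofReal_le_ofReal (key y)
        _ = ENNReal.ofReal C₂ * ∫⁻ y : EuclideanSpace ℝ (Fin d),
              ENNReal.ofReal (exp (-(b / 2) * ‖y - x‖ ^ 2)) := by
            simp_rw [ENNReal.ofReal_mul hC₂0]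
            rw [lintegral_const_mul' _ _ ENNReal.ofReal_ne_top]
        _ = ENNReal.ofReal C₂ * ∫⁻ z : EuclideanSpace ℝ (Fin d),
              ENNReal.ofReal (exp (-(b / 2) * ‖z‖ ^ 2)) := by
            congr 1
            simp_rw [sub_eq_add_neg]
            exact lintegral_add_right_eq_self
              (fun z : EuclideanSpace ℝ (Fin d) =>
                ENNReal.ofReal (exp (-(b / 2) * ‖z‖ ^ 2))) (-x)
        _ = ENNReal.ofReal C₂ * ENNReal.ofReal ((π / (b / 2)) ^ ((d : ℝ) / 2)) := by
            rw [gauss_lint d (by positivity)]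
        _ = ENNReal.ofReal (K * τ ^ e) := by
            rw [← ENNReal.ofReal_mul hC₂0]
            congr 1
            have hπb : π / (b / 2) = 8 * π / p * τ := by
              rw [hbdef]; field_simp; ring
            rw [hC₂, hK, he, hπb, Real.mul_rpow (by positivity) hτ.le,
              Real.rpow_add hτ]
            ring
  have hInt : IntegrableOn (fun s : ℝ => (t - s) ^ e) (Set.Ioc 0 t) := by
    have h1 : IntervalIntegrable (fun u : ℝ => u ^ e) volume 0 t :=
      intervalIntegral.intervalIntegrable_rpow' he1
    have h2 := h1.comp_sub_left t
    simp only [sub_zero, sub_self] at h2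
    exact (intervalIntegrable_iff_integrableOn_Ioc_of_le ht.le).mp h2.symm
  have hfin : ∫⁻ s in Set.Ioc (0 : ℝ) t, ENNReal.ofReal ((t - s) ^ e) < ⊤ := by
    refine lt_of_le_of_lt (lintegral_mono fun s => Real.ofReal_le_enorm _) ?_
    exact hInt.2
  calc (∫⁻ s in Set.Ioc (0 : ℝ) t, ∫⁻ y : EuclideanSpace ℝ (Fin d),
        ENNReal.ofReal (g (t - s) (x - y) ^ p * ‖y‖ ^ a))
      ≤ ∫⁻ s in Set.Ioc (0 : ℝ) t, ENNReal.ofReal (K * (t - s) ^ e) :=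
        setLIntegral_mono' measurableSet_Ioc main
    _ = ENNReal.ofReal K * ∫⁻ s in Set.Ioc (0 : ℝ) t, ENNReal.ofReal ((t - s) ^ e) := by
        simp_rw [ENNReal.ofReal_mul hK0]
        rw [lintegral_const_mul' _ _ ENNReal.ofReal_ne_top]
    _ < ⊤ := ENNReal.mul_lt_top ENNReal.ofReal_lt_top hfin
end

section
/- Let d ≥ 1 and a ≥ 0, let g be the heat kernel in dimension d, and fix T > 0. Then the function x ↦ ∫₀^T ∫_{ℝ^d} g(s, x-y)^p |y|^a dy ds (for 0 < p < 1+2/d) grows at most polynomially in |x|: there exist constants C > 0 and m ≥ 0 such that this function is bounded by C(1+|x|)^m for all x ∈ ℝ^d. -/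
open MeasureTheory Real

set_option maxHeartbeats 1000000

private lemma pow_div_fact_le_exp {x : ℝ} (hx : 0 ≤ x) (n : ℕ) :
    x ^ n / n.factorial ≤ exp x :=
  le_trans (Finset.single_le_sum (f := fun i => x ^ i / i.factorial)
    (fun i _ => by positivity) (Finset.self_mem_range_succ n))
    (Real.sum_le_exp_of_nonneg hx (n + 1))

private lemma integrable_gauss (d : ℕ) {b : ℝ} (hb : 0 < b) :
    Integrable (fun v : EuclideanSpace ℝ (Fin d) => rexp (-b * ‖v‖ ^ 2)) := by
  have h := (GaussianFourier.integrable_cexp_neg_mul_sq_norm_add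
      (V := EuclideanSpace ℝ (Fin d)) (b := (b : ℂ)) (by simpa using hb) 0 0).norm
  simp only [zero_mul, add_zero] at h
  refine h.congr (Filter.Eventually.of_forall fun v => ?_)
  simp only [Complex.norm_exp]
  congr 1
  have : (-(b : ℂ) * (‖v‖ : ℂ) ^ 2) = ((-b * ‖v‖ ^ 2 : ℝ) : ℂ) := by push_cast; ring
  rw [this, Complex.ofReal_re]

private lemma gauss_lintegral (d : ℕ) {b : ℝ} (hb : 0 < b) (x : EuclideanSpace ℝ (Fin d)) :
    ∫⁻ y : EuclideanSpace ℝ (Fin d), ENNReal.ofReal (rexp (-b * ‖x - y‖ ^ 2)) =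
      ENNReal.ofReal ((π / b) ^ ((d : ℝ) / 2)) := by
  simp_rw [norm_sub_rev x]
  rw [lintegral_sub_right_eq_self
    (fun z : EuclideanSpace ℝ (Fin d) => ENNReal.ofReal (rexp (-b * ‖z‖ ^ 2))) x]
  rw [← ofReal_integral_eq_lintegral_ofReal (integrable_gauss d hb)
      (Filter.Eventually.of_forall fun v => (exp_pos _).le)]
  rw [GaussianFourier.integral_rexp_neg_mul_sq_norm hb]
  norm_num

/-- The function `x ↦ ∫₀^T ∫_{ℝ^d} g(s, x-y)^p |y|^a dy ds` grows at most
polynomially in `|x|`. -/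
theorem heat_kernel_power_poly_growth (d : ℕ) (hd : 1 ≤ d)
    (g : ℝ → EuclideanSpace ℝ (Fin d) → ℝ)
    (hg : ∀ t x, g t x = if 0 < t then (4 * π * t) ^ (-(d : ℝ) / 2) * exp (-‖x‖ ^ 2 / (4 * t))
      else 0)
    (a : ℝ) (ha : 0 ≤ a) (T : ℝ) (hT : 0 < T)
    (p : ℝ) (hp : 0 < p) (hp' : p < 1 + 2 / d) :
    ∃ C > (0 : ℝ), ∃ m ≥ (0 : ℝ), ∀ x : EuclideanSpace ℝ (Fin d),
      (∫⁻ s in Set.Ioc (0 : ℝ) T, ∫⁻ y : EuclideanSpace ℝ (Fin d),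
          ENNReal.ofReal (g s (x - y) ^ p * ‖y‖ ^ a))
        ≤ ENNReal.ofReal (C * (1 + ‖x‖) ^ m) := by
  have hd1 : (1 : ℝ) ≤ d := by exact_mod_cast hd
  have hd0 : (0 : ℝ) < d := by linarith
  set n : ℕ := ⌈a / 2⌉₊ with hn
  have han : a ≤ 2 * (n : ℝ) := by
    have := Nat.le_ceil (a / 2)
    rw [← hn] at this
    linarith
  set M : ℝ := 1 + (n.factorial : ℝ) * (8 * T / p) ^ n with hMdef
  have hM1 : 1 ≤ M := by
    have : (0 : ℝ) ≤ (n.factorial : ℝ) * (8 * T / p) ^ n := by positivity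
    simp only [hMdef]; linarith
  set D : ℝ := 2 ^ a * (1 + M) with hDdef
  have hD0 : 0 < D := mul_pos (rpow_pos_of_pos two_pos a) (by linarith)
  set K : ℝ := D * (4 * π) ^ (-(d : ℝ) * p / 2) * (8 * π / p) ^ ((d : ℝ) / 2) with hKdef
  have hK0 : 0 < K :=
    mul_pos (mul_pos hD0 (rpow_pos_of_pos (by positivity) _)) (rpow_pos_of_pos (by positivity) _)
  set α : ℝ := (d : ℝ) * (1 - p) / 2 with hαdef
  have hα1 : -1 < α := by
    have e : (2 / (d : ℝ)) * d = 2 := div_mul_cancel₀ 2 (ne_of_gt hd0)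
    have h2 : p * d < d + 2 := by nlinarith [mul_lt_mul_of_pos_right hp' hd0]
    simp only [hαdef]; nlinarith
  have hV0 : (0 : ℝ) ≤ ∫ s in Set.Ioc (0 : ℝ) T, s ^ α :=
    setIntegral_nonneg measurableSet_Ioc fun s hs => rpow_nonneg hs.1.le α
  refine ⟨K * ((∫ s in Set.Ioc (0 : ℝ) T, s ^ α) + 1),
    mul_pos hK0 (by linarith), a, ha, fun x => ?_⟩
  set X : ℝ := (1 + ‖x‖) ^ a with hXdef
  have hX0 : (0 : ℝ) ≤ X := rpow_nonneg (by positivity) a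
  have hX1 : (1 : ℝ) ≤ X := by
    rw [hXdef, show (1 : ℝ) = 1 ^ a from (one_rpow a).symm]
    exact rpow_le_rpow zero_le_one (by rw [one_rpow]; linarith [norm_nonneg x]) ha
  -- moment bound
  have hmom : ∀ s : ℝ, 0 < s → s ≤ T → ∀ u : ℝ, 0 ≤ u →
      u ^ a * exp (-(p / (8 * s)) * u ^ 2) ≤ M := by
    intro s hs0 hsT u hu
    set c : ℝ := p / (8 * s) with hc
    have hc0 : 0 < c := by positivity
    rcases le_total u 1 with h1 | h1
    · have hua : u ^ a ≤ 1 := Real.rpow_le_one hu h1 ha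
      have he : exp (-c * u ^ 2) ≤ 1 :=
        exp_le_one_iff.mpr (by nlinarith [mul_nonneg hc0.le (sq_nonneg u)])
      calc u ^ a * exp (-c * u ^ 2) ≤ 1 * 1 :=
            mul_le_mul hua he (exp_pos _).le zero_le_one
        _ ≤ M := by linarith
    · have h2n : a ≤ ((2 * n : ℕ) : ℝ) := by push_cast; linarith
      have h2 : u ^ a ≤ (u ^ 2) ^ n := by
        calc u ^ a ≤ u ^ ((2 * n : ℕ) : ℝ) := rpow_le_rpow_of_exponent_le h1 h2n
          _ = (u ^ 2) ^ n := by rw [rpow_natCast, pow_mul]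
      have hm := pow_div_fact_le_exp (show (0 : ℝ) ≤ c * u ^ 2 by positivity) n
      rw [div_le_iff₀ (by positivity : (0 : ℝ) < (n.factorial : ℝ))] at hm
      have e2 : exp (c * u ^ 2) * exp (-c * u ^ 2) = 1 := by
        rw [← exp_add]; simp
      have h3 : c ^ n * ((u ^ 2) ^ n * exp (-c * u ^ 2)) ≤ (n.factorial : ℝ) := by
        calc c ^ n * ((u ^ 2) ^ n * exp (-c * u ^ 2))
            = (c * u ^ 2) ^ n * exp (-c * u ^ 2) := by rw [mul_pow]; ring
          _ ≤ exp (c * u ^ 2) * n.factorial * exp (-c * u ^ 2) :=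
              mul_le_mul_of_nonneg_right hm (exp_pos _).le
          _ = (exp (c * u ^ 2) * exp (-c * u ^ 2)) * n.factorial := by ring
          _ = n.factorial := by rw [e2, one_mul]
      have h4 : (u ^ 2) ^ n * exp (-c * u ^ 2) ≤ (n.factorial : ℝ) / c ^ n := by
        rw [le_div_iff₀ (by positivity : (0 : ℝ) < c ^ n)]
        linear_combination h3
      have hcinv : c⁻¹ = 8 * s / p := by rw [hc, inv_div]
      have h8 : (8 * s / p) ^ n ≤ (8 * T / p) ^ n :=
        pow_le_pow_left₀ (by positivity) ((div_le_div_iff_of_pos_right hp).mpr (by linarith)) n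
      have h5 : (n.factorial : ℝ) / c ^ n ≤ (n.factorial : ℝ) * (8 * T / p) ^ n := by
        rw [div_eq_mul_inv, ← inv_pow, hcinv]
        exact mul_le_mul_of_nonneg_left h8 (Nat.cast_nonneg _)
      calc u ^ a * exp (-c * u ^ 2)
          ≤ (u ^ 2) ^ n * exp (-c * u ^ 2) :=
            mul_le_mul_of_nonneg_right h2 (exp_pos _).le
        _ ≤ (n.factorial : ℝ) / c ^ n := h4
        _ ≤ (n.factorial : ℝ) * (8 * T / p) ^ n := h5
        _ ≤ M := by simp only [hMdef]; linarith
  -- pointwise bound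
  have hpt : ∀ s ∈ Set.Ioc (0 : ℝ) T, ∀ y : EuclideanSpace ℝ (Fin d),
      g s (x - y) ^ p * ‖y‖ ^ a ≤
        D * X * (4 * π * s) ^ (-(d : ℝ) * p / 2) * exp (-(p / (8 * s)) * ‖x - y‖ ^ 2) := by
    intro s hs y
    obtain ⟨hs0, hsT⟩ := hs
    have h4πs : (0 : ℝ) < 4 * π * s := by positivity
    rw [hg, if_pos hs0]
    rw [Real.mul_rpow (rpow_nonneg h4πs.le _) (exp_pos _).le,
        ← Real.rpow_mul h4πs.le, ← Real.exp_mul]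
    have eexp : exp (-‖x - y‖ ^ 2 / (4 * s) * p)
        = exp (-(p / (8 * s)) * ‖x - y‖ ^ 2) * exp (-(p / (8 * s)) * ‖x - y‖ ^ 2) := by
      rw [← exp_add]; congr 1; field_simp; ring
    rw [eexp, show -(d : ℝ) / 2 * p = -(d : ℝ) * p / 2 by ring]
    have hcore : exp (-(p / (8 * s)) * ‖x - y‖ ^ 2) * ‖y‖ ^ a ≤ D * X := by
      have hyb : ‖y‖ ≤ ‖x‖ + ‖x - y‖ := by
        calc ‖y‖ = ‖x - (x - y)‖ := by rw [sub_sub_cancel]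
          _ ≤ ‖x‖ + ‖x - y‖ := norm_sub_le _ _
      have h6 : ‖y‖ ^ a ≤ 2 ^ a * (‖x‖ ^ a + ‖x - y‖ ^ a) := by
        have hmax : ‖y‖ ≤ 2 * max ‖x‖ ‖x - y‖ := by
          rcases max_cases ‖x‖ ‖x - y‖ with ⟨h, h'⟩ | ⟨h, h'⟩ <;> rw [h] <;> linarith
        calc ‖y‖ ^ a ≤ (2 * max ‖x‖ ‖x - y‖) ^ a :=
              rpow_le_rpow (norm_nonneg y) hmax ha
          _ = 2 ^ a * (max ‖x‖ ‖x - y‖) ^ a :=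
              Real.mul_rpow (by norm_num) (le_max_iff.mpr (Or.inl (norm_nonneg x)))
          _ ≤ 2 ^ a * (‖x‖ ^ a + ‖x - y‖ ^ a) := by
              apply mul_le_mul_of_nonneg_left _ (rpow_nonneg (by norm_num) a)
              rcases max_cases ‖x‖ ‖x - y‖ with ⟨h, _⟩ | ⟨h, _⟩ <;> rw [h]
              · linarith [rpow_nonneg (norm_nonneg (x - y)) a]
              · linarith [rpow_nonneg (norm_nonneg x) a]
      have hE1 : exp (-(p / (8 * s)) * ‖x - y‖ ^ 2) ≤ 1 := by
        apply exp_le_one_iff.mpr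
        nlinarith [mul_nonneg (div_pos hp (by linarith : (0:ℝ) < 8 * s)).le
          (sq_nonneg ‖x - y‖)]
      have hE0 : (0 : ℝ) ≤ exp (-(p / (8 * s)) * ‖x - y‖ ^ 2) := (exp_pos _).le
      have hmom' := hmom s hs0 hsT ‖x - y‖ (norm_nonneg _)
      have hxa : ‖x‖ ^ a ≤ X :=
        rpow_le_rpow (norm_nonneg x) (by linarith [norm_nonneg x]) ha
      calc exp (-(p / (8 * s)) * ‖x - y‖ ^ 2) * ‖y‖ ^ a
          ≤ exp (-(p / (8 * s)) * ‖x - y‖ ^ 2) * (2 ^ a * (‖x‖ ^ a + ‖x - y‖ ^ a)) :=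
            mul_le_mul_of_nonneg_left h6 hE0
        _ = 2 ^ a * (‖x‖ ^ a * exp (-(p / (8 * s)) * ‖x - y‖ ^ 2)
              + ‖x - y‖ ^ a * exp (-(p / (8 * s)) * ‖x - y‖ ^ 2)) := by ring
        _ ≤ 2 ^ a * (X + M) := by
            apply mul_le_mul_of_nonneg_left _ (rpow_nonneg (by norm_num : (0:ℝ) ≤ 2) a)
            have hx1 : ‖x‖ ^ a * exp (-(p / (8 * s)) * ‖x - y‖ ^ 2) ≤ X * 1 :=
              mul_le_mul hxa hE1 hE0 hX0
            linarith
        _ ≤ D * X := by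
            rw [hDdef, mul_assoc]
            refine mul_le_mul_of_nonneg_left ?_ (rpow_nonneg (by norm_num : (0:ℝ) ≤ 2) a)
            nlinarith [hM1, hX1]
    calc (4 * π * s) ^ (-(d : ℝ) * p / 2) *
          (exp (-(p / (8 * s)) * ‖x - y‖ ^ 2) * exp (-(p / (8 * s)) * ‖x - y‖ ^ 2)) * ‖y‖ ^ a
        = ((4 * π * s) ^ (-(d : ℝ) * p / 2) * exp (-(p / (8 * s)) * ‖x - y‖ ^ 2)) *
            (exp (-(p / (8 * s)) * ‖x - y‖ ^ 2) * ‖y‖ ^ a) := by ring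
      _ ≤ ((4 * π * s) ^ (-(d : ℝ) * p / 2) * exp (-(p / (8 * s)) * ‖x - y‖ ^ 2)) * (D * X) :=
          mul_le_mul_of_nonneg_left hcore
            (mul_nonneg (rpow_nonneg h4πs.le _) (exp_pos _).le)
      _ = D * X * (4 * π * s) ^ (-(d : ℝ) * p / 2) * exp (-(p / (8 * s)) * ‖x - y‖ ^ 2) := by
          ring
  -- inner integral bound
  have hinner : ∀ s ∈ Set.Ioc (0 : ℝ) T,
      (∫⁻ y : EuclideanSpace ℝ (Fin d), ENNReal.ofReal (g s (x - y) ^ p * ‖y‖ ^ a))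
        ≤ ENNReal.ofReal (K * X * s ^ α) := by
    intro s hs
    have hs0 := hs.1
    have hb8 : (0 : ℝ) < p / (8 * s) := by positivity
    have hk0 : (0 : ℝ) ≤ D * X * (4 * π * s) ^ (-(d : ℝ) * p / 2) := by
      have := rpow_nonneg (show (0:ℝ) ≤ 4 * π * s by positivity) (-(d : ℝ) * p / 2)
      positivity
    calc (∫⁻ y : EuclideanSpace ℝ (Fin d), ENNReal.ofReal (g s (x - y) ^ p * ‖y‖ ^ a))
        ≤ ∫⁻ y : EuclideanSpace ℝ (Fin d), ENNReal.ofReal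
            (D * X * (4 * π * s) ^ (-(d : ℝ) * p / 2) *
              exp (-(p / (8 * s)) * ‖x - y‖ ^ 2)) :=
          lintegral_mono fun y => ENNReal.ofReal_le_ofReal (hpt s hs y)
      _ = ENNReal.ofReal (D * X * (4 * π * s) ^ (-(d : ℝ) * p / 2)) *
            ∫⁻ y : EuclideanSpace ℝ (Fin d),
              ENNReal.ofReal (exp (-(p / (8 * s)) * ‖x - y‖ ^ 2)) := by
          simp_rw [ENNReal.ofReal_mul hk0]
          rw [lintegral_const_mul' _ _ ENNReal.ofReal_ne_top]
      _ = ENNReal.ofReal (D * X * (4 * π * s) ^ (-(d : ℝ) * p / 2)) *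
            ENNReal.ofReal ((π / (p / (8 * s))) ^ ((d : ℝ) / 2)) := by
          rw [gauss_lintegral d hb8 x]
      _ = ENNReal.ofReal (K * X * s ^ α) := by
          rw [← ENNReal.ofReal_mul hk0]
          congr 1
          have e1 : π / (p / (8 * s)) = 8 * π / p * s := by field_simp
          have e2 : s ^ (-(d : ℝ) * p / 2) * s ^ ((d : ℝ) / 2) = s ^ α := by
            rw [← Real.rpow_add hs0]; congr 1; rw [hαdef]; ring
          rw [e1, Real.mul_rpow (show (0:ℝ) ≤ 4 * π by positivity) hs0.le,
            Real.mul_rpow (show (0:ℝ) ≤ 8 * π / p by positivity) hs0.le, hKdef, ← e2]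
          ring
  -- outer integral
  have hmeasb : Measurable fun s : ℝ => ENNReal.ofReal (K * X * s ^ α) := by
    fun_prop
  calc (∫⁻ s in Set.Ioc (0 : ℝ) T, ∫⁻ y : EuclideanSpace ℝ (Fin d),
          ENNReal.ofReal (g s (x - y) ^ p * ‖y‖ ^ a))
      ≤ ∫⁻ s in Set.Ioc (0 : ℝ) T, ENNReal.ofReal (K * X * s ^ α) :=
        setLIntegral_mono hmeasb hinner
    _ = ENNReal.ofReal (K * X) * ∫⁻ s in Set.Ioc (0 : ℝ) T, ENNReal.ofReal (s ^ α) := by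
        simp_rw [ENNReal.ofReal_mul (by positivity : (0 : ℝ) ≤ K * X)]
        rw [lintegral_const_mul' _ _ ENNReal.ofReal_ne_top]
    _ = ENNReal.ofReal (K * X) * ENNReal.ofReal (∫ s in Set.Ioc (0 : ℝ) T, s ^ α) := by
        rw [← ofReal_integral_eq_lintegral_ofReal
          (intervalIntegral.intervalIntegrable_rpow' hα1).1
          ((ae_restrict_iff' measurableSet_Ioc).mpr
            (Filter.Eventually.of_forall fun s hs => rpow_nonneg hs.1.le α))]
    _ ≤ ENNReal.ofReal (K * ((∫ s in Set.Ioc (0 : ℝ) T, s ^ α) + 1) * X) := by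
        rw [← ENNReal.ofReal_mul (by positivity : (0 : ℝ) ≤ K * X)]
        apply ENNReal.ofReal_le_ofReal
        nlinarith [mul_nonneg hK0.le hX0]
end

section
/- Let α, β, C > 0 with β(α) := αη(p-q)/2 where η(p-q)/2 < 1 - d(p-1)/2 =: κ and κ > 0. Then the sequence a_n := Cⁿ · Γ((1 + nη(p-q))/2) · Γ(κ)ⁿ / Γ(1 + κn) satisfies ∑_{n=1}^∞ a_n^{1/r} < ∞ for every r ≥ 1. In particular a_n → 0. -/
open Real

lemma gautschi_up {x a : ℝ} (hx : 0 < x) (ha : 0 ≤ a) (ha1 : a ≤ 1) :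
    Gamma (x + a) ≤ Gamma x * x ^ a := by
  rcases eq_or_lt_of_le ha with h0 | h0
  · simp [← h0]
  rcases eq_or_lt_of_le ha1 with h1 | h1
  · rw [h1, rpow_one, Gamma_add_one hx.ne', mul_comm]
  have key := Gamma_mul_add_mul_le_rpow_Gamma_mul_rpow_Gamma (s := x) (t := x + 1)
    hx (by linarith) (a := 1 - a) (b := a) (by linarith) h0 (by ring)
  have harg : (1 - a) * x + a * (x + 1) = x + a := by ring
  rw [harg] at key
  calc Gamma (x + a) ≤ Gamma x ^ (1 - a) * Gamma (x + 1) ^ a := key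
    _ = Gamma x * x ^ a := by
        rw [Gamma_add_one hx.ne', mul_rpow hx.le (Gamma_pos_of_pos hx).le,
          mul_comm (x ^ a), ← mul_assoc, ← rpow_add (Gamma_pos_of_pos hx),
          sub_add_cancel, rpow_one]

lemma gautschi_up_iter (k : ℕ) : ∀ {x t : ℝ}, 0 < x → 0 ≤ t → t ≤ k →
    Gamma (x + t) ≤ Gamma x * (x + t) ^ t := by
  induction k with
  | zero =>
    intro x t hx ht ht'
    have : t = 0 := le_antisymm (by exact_mod_cast ht') ht
    simp [this]
  | succ k ih =>
    intro x t hx ht ht'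
    by_cases h1 : t ≤ 1
    · calc Gamma (x + t) ≤ Gamma x * x ^ t := gautschi_up hx ht h1
        _ ≤ Gamma x * (x + t) ^ t :=
          mul_le_mul_of_nonneg_left
            (rpow_le_rpow hx.le (by linarith) ht) (Gamma_pos_of_pos hx).le
    · push_neg at h1
      have hu0 : 0 ≤ t - 1 := by linarith
      have hux : 0 < x + (t - 1) := by linarith
      have huk : t - 1 ≤ k := by push_cast at ht' ⊢; linarith
      have h2 : Gamma (x + (t - 1)) ≤ Gamma x * (x + (t - 1)) ^ (t - 1) := ih hx hu0 huk
      have h3 : Gamma (x + t) = (x + (t - 1)) * Gamma (x + (t - 1)) := by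
        rw [show x + t = (x + (t - 1)) + 1 by ring, Gamma_add_one hux.ne']
      calc Gamma (x + t) = (x + (t - 1)) * Gamma (x + (t - 1)) := h3
        _ ≤ (x + (t - 1)) * (Gamma x * (x + (t - 1)) ^ (t - 1)) :=
            mul_le_mul_of_nonneg_left h2 hux.le
        _ = Gamma x * (x + (t - 1)) ^ t := by
            have he : (x + (t - 1)) ^ (t - 1 + 1) = (x + (t - 1)) ^ (t - 1) * (x + (t - 1)) :=
              rpow_add_one hux.ne' (t - 1)
            rw [show t - 1 + 1 = t by ring] at he
            rw [he]; ring
        _ ≤ Gamma x * (x + t) ^ t :=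
            mul_le_mul_of_nonneg_left
              (rpow_le_rpow hux.le (by linarith) ht) (Gamma_pos_of_pos hx).le

lemma gautschi_lo {y t : ℝ} (hy : 1 ≤ y) (ht : 0 ≤ t) (ht1 : t ≤ 1) :
    Gamma y * y ^ t ≤ 2 * Gamma (y + t) := by
  have hy0 : 0 < y := by linarith
  have hyt : 0 < y + t := by linarith
  have key := gautschi_up (x := y + t) (a := 1 - t) hyt (by linarith) (by linarith)
  rw [show y + t + (1 - t) = y + 1 by ring, Gamma_add_one hy0.ne'] at key
  -- key : y * Gamma y ≤ Gamma (y + t) * (y + t) ^ (1 - t)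
  have hpow : y ^ t * (y + t) ^ (1 - t) ≤ y + 1 := by
    calc y ^ t * (y + t) ^ (1 - t)
        ≤ (y + 1) ^ t * (y + 1) ^ (1 - t) :=
          mul_le_mul (rpow_le_rpow hy0.le (by linarith) ht)
            (rpow_le_rpow hyt.le (by linarith) (by linarith))
            (rpow_nonneg hyt.le _) (rpow_nonneg (by linarith) _)
      _ = y + 1 := by rw [← rpow_add (by linarith), add_sub_cancel, rpow_one]
  have hc : 0 < (y + t) ^ (1 - t) := rpow_pos_of_pos hyt _
  rw [← mul_le_mul_iff_of_pos_right hc]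
  calc Gamma y * y ^ t * (y + t) ^ (1 - t)
      = Gamma y * (y ^ t * (y + t) ^ (1 - t)) := by ring
    _ ≤ Gamma y * (y + 1) := mul_le_mul_of_nonneg_left hpow (Gamma_pos_of_pos hy0).le
    _ ≤ Gamma y * (2 * y) := mul_le_mul_of_nonneg_left (by linarith) (Gamma_pos_of_pos hy0).le
    _ = 2 * (y * Gamma y) := by ring
    _ ≤ 2 * (Gamma (y + t) * (y + t) ^ (1 - t)) := by linarith
    _ = 2 * Gamma (y + t) * (y + t) ^ (1 - t) := by ring

lemma gautschi_lo_iter (k : ℕ) : ∀ {y t : ℝ}, 1 ≤ y → 0 ≤ t → t ≤ k →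
    Gamma y * y ^ t ≤ 2 * Gamma (y + t) := by
  induction k with
  | zero =>
    intro y t hy ht ht'
    have h0 : t = 0 := le_antisymm (by exact_mod_cast ht') ht
    simp only [h0, rpow_zero, mul_one, add_zero]
    nlinarith [Gamma_pos_of_pos (show (0:ℝ) < y by linarith)]
  | succ k ih =>
    intro y t hy ht ht'
    have hy0 : 0 < y := by linarith
    by_cases h1 : t ≤ 1
    · exact gautschi_lo hy ht h1
    · push_neg at h1
      have hu0 : 0 ≤ t - 1 := by linarith
      have huk : t - 1 ≤ k := by push_cast at ht' ⊢; linarith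
      have h2 : Gamma y * y ^ (t - 1) ≤ 2 * Gamma (y + (t - 1)) := ih hy hu0 huk
      have hyu : 0 < y + (t - 1) := by linarith
      have h3 : Gamma (y + t) = (y + (t - 1)) * Gamma (y + (t - 1)) := by
        rw [show y + t = (y + (t - 1)) + 1 by ring, Gamma_add_one hyu.ne']
      have hyy : y ≤ y + (t - 1) := by linarith
      calc Gamma y * y ^ t = (Gamma y * y ^ (t - 1)) * y := by
            have he : y ^ (t - 1 + 1) = y ^ (t - 1) * y := rpow_add_one hy0.ne' (t - 1)
            rw [show t - 1 + 1 = t by ring] at he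
            rw [he]; ring
        _ ≤ (2 * Gamma (y + (t - 1))) * y :=
            mul_le_mul_of_nonneg_right h2 hy0.le
        _ ≤ (2 * Gamma (y + (t - 1))) * (y + (t - 1)) :=
            mul_le_mul_of_nonneg_left hyy
              (by positivity)
        _ = 2 * Gamma (y + t) := by rw [h3]; ring

/-- Summability of the Picard iteration bounds: with `κ = 1 - d(p-1)/2 > 0` and
`η(p-q)/2 < κ`, the sequence `a_n = Cⁿ Γ((1+nη(p-q))/2) Γ(κ)ⁿ / Γ(1+κn)`
satisfies `∑ a_n^{1/r} < ∞` for every `r ≥ 1`; in particular `a_n → 0`. -/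
theorem picard_bound_summable (d : ℕ) (hd : 1 ≤ d) (η p q C : ℝ)
    (hη : 0 < η) (hp : 0 < p) (hq : 0 < q) (hC : 0 < C) (hpq : q ≤ p)
    (κ : ℝ) (hκdef : κ = 1 - d * (p - 1) / 2) (hκ : 0 < κ)
    (hsmall : η * (p - q) / 2 < κ)
    (a : ℕ → ℝ)
    (ha : ∀ n : ℕ, a n = C ^ n * Gamma ((1 + n * η * (p - q)) / 2) * Gamma κ ^ n
        / Gamma (1 + κ * n)) :
    (∀ r : ℝ, 1 ≤ r → Summable fun n : ℕ => a (n + 1) ^ (1 / r)) ∧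
      Filter.Tendsto a Filter.atTop (nhds 0) := by
  have hpq0 : 0 ≤ p - q := by linarith
  set s : ℝ := η * (p - q) / 2 with hs_def
  have hs0 : 0 ≤ s := by positivity
  have hsκ : s < κ := hsmall
  set X : ℕ → ℝ := fun n => (1 + n * η * (p - q)) / 2 with hX_def
  set Y : ℕ → ℝ := fun n => 1 + κ * n with hY_def
  have hX : ∀ n : ℕ, 0 < X n := by
    intro n
    have : (0:ℝ) ≤ (n:ℝ) * η * (p - q) :=
      mul_nonneg (mul_nonneg n.cast_nonneg hη.le) hpq0
    simp only [hX_def]; linarith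
  have hY1 : ∀ n : ℕ, 1 ≤ Y n := by
    intro n
    have : (0:ℝ) ≤ κ * n := mul_nonneg hκ.le n.cast_nonneg
    simp only [hY_def]; linarith
  have hY0 : ∀ n : ℕ, 0 < Y n := fun n => lt_of_lt_of_le one_pos (hY1 n)
  have hXs : ∀ n : ℕ, (1 + (n+1 : ℕ) * η * (p - q)) / 2 = X n + s := by
    intro n; simp only [hX_def, hs_def]; push_cast; ring
  have hYs : ∀ n : ℕ, 1 + κ * ((n+1 : ℕ) : ℝ) = Y n + κ := by
    intro n; simp only [hY_def]; push_cast; ring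
  have apos : ∀ n : ℕ, 0 < a n := by
    intro n
    rw [ha n]
    have g1 : 0 < Gamma ((1 + n * η * (p - q)) / 2) := Gamma_pos_of_pos (hX n)
    have g2 : 0 < Gamma (1 + κ * n) := Gamma_pos_of_pos (hY0 n)
    have g3 : 0 < Gamma κ := Gamma_pos_of_pos hκ
    positivity
  -- the quantitative smallness of the ratio, for large n
  set B : ℝ := min κ 1 with hB_def
  have hB : 0 < B := lt_min hκ one_pos
  set D : ℝ := 4 * C * Gamma κ * (s+1) ^ s / B ^ κ with hD_def
  have hDlim : Filter.Tendsto (fun n : ℕ => ((n:ℝ) + 1) ^ (κ - s)) Filter.atTop Filter.atTop :=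
    (tendsto_rpow_atTop (by linarith)).comp
      (Filter.tendsto_atTop_add_const_right _ 1 tendsto_natCast_atTop_atTop)
  obtain ⟨N, hN⟩ := Filter.eventually_atTop.mp (hDlim.eventually_ge_atTop D)
  have key : ∀ n, N ≤ n → 4 * C * Gamma κ * (X n + s) ^ s ≤ (Y n) ^ κ := by
    intro n hn
    have hn1 : (1:ℝ) ≤ (n:ℝ) + 1 := by linarith [(Nat.cast_nonneg n : (0:ℝ) ≤ n)]
    have hXns : 0 < X n + s := by have := hX n; linarith
    have hXb : X n + s ≤ (s + 1) * ((n:ℝ) + 1) := by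
      have hexp : X n + s = 1/2 + ((n:ℝ) + 1) * s := by
        simp only [hX_def, hs_def]; ring
      nlinarith [mul_nonneg (show (0:ℝ) ≤ (n:ℝ)+1 by linarith) hs0]
    have hYb : B * ((n:ℝ) + 1) ≤ Y n := by
      simp only [hY_def, hB_def]
      rcases le_total κ 1 with h | h
      · rw [min_eq_left h]; nlinarith [(Nat.cast_nonneg n : (0:ℝ) ≤ n)]
      · rw [min_eq_right h]; nlinarith [(Nat.cast_nonneg n : (0:ℝ) ≤ n)]
    have hGκ : 0 < Gamma κ := Gamma_pos_of_pos hκ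
    have hBκ : 0 < B ^ κ := rpow_pos_of_pos hB κ
    calc 4 * C * Gamma κ * (X n + s) ^ s
        ≤ 4 * C * Gamma κ * ((s + 1) * ((n:ℝ) + 1)) ^ s := by
          apply mul_le_mul_of_nonneg_left (rpow_le_rpow hXns.le hXb hs0) (by positivity)
      _ = (D * B ^ κ) * ((n:ℝ) + 1) ^ s := by
          rw [mul_rpow (by linarith) (by linarith), hD_def, div_mul_cancel₀ _ hBκ.ne']
          ring
      _ ≤ (((n:ℝ) + 1) ^ (κ - s) * B ^ κ) * ((n:ℝ) + 1) ^ s := by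
          apply mul_le_mul_of_nonneg_right _ (rpow_nonneg (by linarith) s)
          exact mul_le_mul_of_nonneg_right (hN n hn) hBκ.le
      _ = B ^ κ * (((n:ℝ) + 1) ^ (κ - s) * ((n:ℝ) + 1) ^ s) := by ring
      _ = B ^ κ * ((n:ℝ) + 1) ^ κ := by
          rw [← rpow_add (by linarith : (0:ℝ) < (n:ℝ) + 1), sub_add_cancel]
      _ = (B * ((n:ℝ) + 1)) ^ κ := (mul_rpow hB.le (by linarith)).symm
      _ ≤ (Y n) ^ κ := rpow_le_rpow (by positivity) hYb hκ.le
  -- ratio bound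
  have ratio : ∀ n, N ≤ n → a (n + 1) ≤ a n / 2 := by
    intro n hn
    have hXns : 0 < X n + s := by have := hX n; linarith
    have GX : 0 < Gamma (X n) := Gamma_pos_of_pos (hX n)
    have GXs : 0 < Gamma (X n + s) := Gamma_pos_of_pos hXns
    have GY : 0 < Gamma (Y n) := Gamma_pos_of_pos (hY0 n)
    have GYκ : 0 < Gamma (Y n + κ) := Gamma_pos_of_pos (by have := hY0 n; linarith)
    have GK : 0 < Gamma κ := Gamma_pos_of_pos hκ
    have hYκ : 0 < (Y n) ^ κ := rpow_pos_of_pos (hY0 n) κ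
    have h1 : Gamma (X n + s) ≤ Gamma (X n) * (X n + s) ^ s :=
      gautschi_up_iter ⌈s⌉₊ (hX n) hs0 (Nat.le_ceil s)
    have h2 : Gamma (Y n) * (Y n) ^ κ ≤ 2 * Gamma (Y n + κ) :=
      gautschi_lo_iter ⌈κ⌉₊ (hY1 n) hκ.le (Nat.le_ceil κ)
    have h2' : Gamma (Y n) ≤ 2 * Gamma (Y n + κ) / (Y n) ^ κ := (le_div_iff₀ hYκ).2 h2
    rw [ha (n+1), ha n, hXs n, hYs n]
    have hden : (0:ℝ) < Gamma (1 + κ * n) * 2 := by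
      have : Gamma (1 + κ * (n:ℝ)) = Gamma (Y n) := by simp only [hY_def]
      rw [this]; positivity
    have hGY' : Gamma (1 + κ * (n:ℝ)) = Gamma (Y n) := by simp only [hY_def]
    have hGX' : Gamma ((1 + (n:ℝ) * η * (p - q)) / 2) = Gamma (X n) := by simp only [hX_def]
    rw [hGY', hGX', div_div, div_le_div_iff₀ GYκ (by positivity)]
    calc C ^ (n+1) * Gamma (X n + s) * Gamma κ ^ (n+1) * (Gamma (Y n) * 2)
        = (2 * C * Gamma κ) * (C ^ n * Gamma κ ^ n) * (Gamma (X n + s) * Gamma (Y n)) := by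
          ring
      _ ≤ (2 * C * Gamma κ) * (C ^ n * Gamma κ ^ n) *
            ((Gamma (X n) * (X n + s) ^ s) * (2 * Gamma (Y n + κ) / (Y n) ^ κ)) := by
          apply mul_le_mul_of_nonneg_left
            (mul_le_mul h1 h2' GY.le (by positivity)) (by positivity)
      _ = (C ^ n * Gamma (X n) * Gamma κ ^ n * Gamma (Y n + κ)) *
            (4 * C * Gamma κ * (X n + s) ^ s / (Y n) ^ κ) := by ring
      _ ≤ (C ^ n * Gamma (X n) * Gamma κ ^ n * Gamma (Y n + κ)) * 1 := by
          apply mul_le_mul_of_nonneg_left ((div_le_one hYκ).2 (key n hn)) (by positivity)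
      _ = C ^ n * Gamma (X n) * Gamma κ ^ n * Gamma (Y n + κ) := mul_one _
  -- geometric decay
  have decay : ∀ m : ℕ, a (N + m) ≤ a N * (1/2) ^ m := by
    intro m
    induction m with
    | zero => simp
    | succ m ih =>
      have h := ratio (N + m) (Nat.le_add_right N m)
      have hp2 : (0:ℝ) < (1/2) ^ m := by positivity
      calc a (N + (m+1)) = a ((N + m) + 1) := by ring_nf
        _ ≤ a (N + m) / 2 := h
        _ ≤ (a N * (1/2)^m) / 2 := by linarith
        _ = a N * (1/2)^(m+1) := by ring
  set c : ℝ := ∑ k ∈ Finset.range (N+1), a k * 2 ^ k with hc_def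
  have hcb : ∀ k, k ∈ Finset.range (N+1) → a k * 2 ^ k ≤ c :=
    fun k hk => Finset.single_le_sum
      (fun i _ => mul_nonneg (apos i).le (by positivity)) hk
  have hc0 : 0 < c :=
    lt_of_lt_of_le (mul_pos (apos 0) (by norm_num) : (0:ℝ) < a 0 * 2 ^ 0)
      (hcb 0 (Finset.mem_range.mpr (Nat.succ_pos N)))
  have hglobal : ∀ n : ℕ, a n ≤ c * (1/2) ^ n := by
    intro n
    have hhalf : ∀ m : ℕ, ((2:ℝ)) ^ m * (1/2) ^ m = 1 := by
      intro m
      rw [one_div, inv_pow, mul_inv_cancel₀ (by positivity)]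
    rcases le_or_gt n N with h | h
    · have := hcb n (Finset.mem_range.mpr (Nat.lt_succ_of_le h))
      calc a n = (a n * 2 ^ n) * (1/2) ^ n := by
            rw [mul_assoc, hhalf n, mul_one]
        _ ≤ c * (1/2) ^ n := mul_le_mul_of_nonneg_right this (by positivity)
    · obtain ⟨m, rfl⟩ := Nat.exists_eq_add_of_le h.le
      have hN' := hcb N (Finset.mem_range.mpr (Nat.lt_succ_self N))
      have haN : a N ≤ c * (1/2) ^ N := by
        calc a N = (a N * 2 ^ N) * (1/2) ^ N := by rw [mul_assoc, hhalf N, mul_one]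
          _ ≤ c * (1/2) ^ N := mul_le_mul_of_nonneg_right hN' (by positivity)
      calc a (N + m) ≤ a N * (1/2) ^ m := decay m
        _ ≤ (c * (1/2) ^ N) * (1/2) ^ m :=
            mul_le_mul_of_nonneg_right haN (by positivity)
        _ = c * (1/2) ^ (N + m) := by rw [pow_add]; ring
  constructor
  · intro r hr
    have hr0 : 0 < r := lt_of_lt_of_le one_pos hr
    have hir : 0 < 1 / r := by positivity
    set q0 : ℝ := (1/2 : ℝ) ^ (1/r) with hq0_def
    have hq0n : 0 ≤ q0 := rpow_nonneg (by norm_num) _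
    have hq0lt : q0 < 1 := rpow_lt_one (by norm_num) (by norm_num) hir
    have hbound : ∀ n : ℕ, a (n+1) ^ (1/r) ≤ (c ^ (1/r) * q0) * q0 ^ n := by
      intro n
      have step1 : a (n+1) ^ (1/r) ≤ (c * (1/2) ^ (n+1)) ^ (1/r) :=
        rpow_le_rpow (apos (n+1)).le (hglobal (n+1)) hir.le
      have step2 : (c * (1/2 : ℝ) ^ (n+1)) ^ (1/r) = c ^ (1/r) * q0 ^ (n+1) := by
        rw [mul_rpow hc0.le (by positivity), hq0_def,
          ← rpow_natCast ((1/2 : ℝ)) (n+1), ← rpow_natCast ((1/2 : ℝ) ^ (1/r)) (n+1),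
          ← rpow_mul (by norm_num : (0:ℝ) ≤ 1/2), ← rpow_mul (by norm_num : (0:ℝ) ≤ 1/2),
          mul_comm (((n+1 : ℕ)) : ℝ) (1/r)]
      rw [step2] at step1
      calc a (n+1) ^ (1/r) ≤ c ^ (1/r) * q0 ^ (n+1) := step1
        _ = (c ^ (1/r) * q0) * q0 ^ n := by rw [pow_succ]; ring
    apply Summable.of_nonneg_of_le
      (fun n => rpow_nonneg (apos (n+1)).le _) hbound
    exact (summable_geometric_of_lt_one hq0n hq0lt).mul_left _
  · apply squeeze_zero (fun n => (apos n).le) hglobal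
    have : Filter.Tendsto (fun n : ℕ => ((1:ℝ)/2) ^ n) Filter.atTop (nhds 0) :=
      tendsto_pow_atTop_nhds_zero_of_lt_one (by norm_num) (by norm_num)
    simpa using this.const_mul c
end

section
/- Let g_{ρ,τ,Λ} be the generalized Gaussian kernel on ℝ₊ × ℝ^d, and let 0 < p < 1 + ρ/(τd). Then for every T > 0, ∫₀^T ∫_{ℝ^d} g_{ρ,τ,Λ}(t,x)^p dx dt < ∞. -/
open MeasureTheory Real

/-- For `0 < p < 1 + ρ/(τd)`, the `p`-th power of the generalized Gaussian kernel
`g_{ρ,τ,Λ}` is integrable over `[0,T] × ℝ^d`. -/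
theorem generalized_gaussian_power_integrable (d : ℕ) (hd : 1 ≤ d)
    (ρ τ Λ K : ℝ) (hρ : 0 < ρ) (hτ : 0 < τ) (hΛ : 0 < Λ) (hK : 0 < K)
    (hKnorm : ∀ t : ℝ, 0 < t →
      ∫ x : EuclideanSpace ℝ (Fin d),
        K * t ^ (-(τ * d / ρ)) * exp (-Λ * ‖x‖ ^ ρ / t ^ τ) = 1)
    (g : ℝ → EuclideanSpace ℝ (Fin d) → ℝ)
    (hg : ∀ t x, g t x = if 0 < t then K * t ^ (-(τ * d / ρ)) * exp (-Λ * ‖x‖ ^ ρ / t ^ τ)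
      else 0)
    (p : ℝ) (hp : 0 < p) (hp' : p < 1 + ρ / (τ * d)) (T : ℝ) (hT : 0 < T) :
    ∫⁻ t in Set.Ioc (0 : ℝ) T, ∫⁻ x : EuclideanSpace ℝ (Fin d),
      ENNReal.ofReal (g t x ^ p) < ⊤ := by
  have hd' : (0 : ℝ) < d := by exact_mod_cast hd
  set a : ℝ := τ * d / ρ with ha_def
  have ha : 0 < a := by positivity
  set C : ℝ := K ^ (p - 1) * p ^ (-((d : ℝ) / ρ)) with hC_def
  have hC : 0 < C := by positivity
  -- key per-time computation
  have key : ∀ t : ℝ, 0 < t → (∫⁻ x : EuclideanSpace ℝ (Fin d),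
      ENNReal.ofReal (g t x ^ p)) = ENNReal.ofReal (C * t ^ ((1 - p) * a)) := by
    intro t ht
    set s : ℝ := t * p ^ (-1 / τ) with hs_def
    have hs : 0 < s := by positivity
    -- s^τ = t^τ / p
    have hsτ : s ^ τ = t ^ τ * p⁻¹ := by
      have hexp : (-1 / τ) * τ = -1 := by field_simp
      rw [hs_def, Real.mul_rpow ht.le (Real.rpow_nonneg hp.le _), ← Real.rpow_mul hp.le,
        hexp, Real.rpow_neg_one]
    have htτ : (0:ℝ) < t ^ τ := Real.rpow_pos_of_pos ht _
    -- pointwise: g t x ^ p = (K * t^(-a))^p * exp(-Λ‖x‖^ρ / s^τ)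
    have hpt : ∀ x : EuclideanSpace ℝ (Fin d),
        g t x ^ p = (K * t ^ (-a)) ^ p * exp (-Λ * ‖x‖ ^ ρ / s ^ τ) := by
      intro x
      rw [hg, if_pos ht, Real.mul_rpow (by positivity) (Real.exp_nonneg _), ← Real.exp_mul]
      congr 1
      rw [hsτ]
      field_simp
    -- normalization at time s
    have hnorm := hKnorm s hs
    have hint : Integrable (fun x : EuclideanSpace ℝ (Fin d) =>
        K * s ^ (-(τ * d / ρ)) * exp (-Λ * ‖x‖ ^ ρ / s ^ τ)) := by
      by_contra h
      rw [integral_undef h] at hnorm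
      norm_num at hnorm
    have h1 : (∫⁻ x : EuclideanSpace ℝ (Fin d), ENNReal.ofReal
        (K * s ^ (-(τ * d / ρ)) * exp (-Λ * ‖x‖ ^ ρ / s ^ τ))) = 1 := by
      rw [← ofReal_integral_eq_lintegral_ofReal hint (Filter.Eventually.of_forall fun x => by positivity),
        hnorm, ENNReal.ofReal_one]
    set c : ℝ := K * s ^ (-a) with hc_def
    have hc : 0 < c := by positivity
    have h2 : (∫⁻ x : EuclideanSpace ℝ (Fin d), ENNReal.ofReal
        (exp (-Λ * ‖x‖ ^ ρ / s ^ τ))) = ENNReal.ofReal c⁻¹ := by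
      have hmul : ENNReal.ofReal c * (∫⁻ x : EuclideanSpace ℝ (Fin d),
          ENNReal.ofReal (exp (-Λ * ‖x‖ ^ ρ / s ^ τ))) = 1 := by
        rw [← lintegral_const_mul' _ _ ENNReal.ofReal_ne_top]
        simp_rw [← ENNReal.ofReal_mul hc.le]
        exact h1
      have := congrArg (fun z => (ENNReal.ofReal c)⁻¹ * z) hmul
      simp only [← mul_assoc, ENNReal.inv_mul_cancel (ENNReal.ofReal_pos.2 hc).ne'
        ENNReal.ofReal_ne_top, one_mul, mul_one] at this
      rw [this, ENNReal.ofReal_inv_of_pos hc]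
    -- now compute the inner integral
    have hval : (∫⁻ x : EuclideanSpace ℝ (Fin d), ENNReal.ofReal (g t x ^ p))
        = ENNReal.ofReal ((K * t ^ (-a)) ^ p * c⁻¹) := by
      simp_rw [hpt, ENNReal.ofReal_mul (le_of_lt (show (0:ℝ) < (K * t ^ (-a)) ^ p
        by positivity))]
      rw [lintegral_const_mul' _ _ ENNReal.ofReal_ne_top, h2,
        ← ENNReal.ofReal_mul (by positivity)]
    rw [hval]
    congr 1
    -- real-number computation
    have hsa : s ^ a = t ^ a * p ^ (-((d : ℝ) / ρ)) := by
      rw [hs_def, Real.mul_rpow ht.le (Real.rpow_nonneg hp.le _), ← Real.rpow_mul hp.le]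
      congr 2
      rw [ha_def]
      field_simp
    rw [hc_def, mul_inv, ← Real.rpow_neg_one K, ← Real.rpow_neg hs.le, neg_neg, hsa,
      Real.mul_rpow hK.le (Real.rpow_nonneg ht.le _), ← Real.rpow_mul ht.le]
    have e1 : K ^ p * K ^ (-1 : ℝ) = K ^ (p - 1) := by
      rw [show p - 1 = p + (-1) by ring, Real.rpow_add hK]
    have e2 : t ^ (-a * p) * t ^ a = t ^ ((1 - p) * a) := by
      rw [show (1 - p) * a = -a * p + a by ring, Real.rpow_add ht]
    rw [hC_def, ← e1, ← e2]; ring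
  -- rewrite the outer integral
  rw [setLIntegral_congr_fun measurableSet_Ioc
    (fun t ht => key t ht.1)]
  have hr : (-1 : ℝ) < (1 - p) * a := by
    rcases le_or_gt p 1 with h | h
    · nlinarith
    · have h1 : p - 1 < ρ / (τ * d) := by linarith
      have h2 : (p - 1) * a < (ρ / (τ * d)) * a := by
        exact mul_lt_mul_of_pos_right h1 ha
      have h3 : (ρ / (τ * d)) * a = 1 := by
        rw [ha_def]; field_simp
      nlinarith
  have hInt : IntegrableOn (fun t : ℝ => t ^ ((1 - p) * a)) (Set.Ioc 0 T) := by
    rw [← intervalIntegrable_iff_integrableOn_Ioc_of_le hT.le]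
    exact intervalIntegral.intervalIntegrable_rpow' hr
  calc (∫⁻ t in Set.Ioc (0:ℝ) T, ENNReal.ofReal (C * t ^ ((1 - p) * a)))
      ≤ ∫⁻ t in Set.Ioc (0:ℝ) T, ENNReal.ofReal C * ENNReal.ofReal (t ^ ((1 - p) * a)) := by
        apply lintegral_mono; intro t; dsimp only; rw [← ENNReal.ofReal_mul hC.le]
    _ = ENNReal.ofReal C * ∫⁻ t in Set.Ioc (0:ℝ) T, ENNReal.ofReal (t ^ ((1 - p) * a)) :=
        lintegral_const_mul' _ _ ENNReal.ofReal_ne_top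
    _ < ⊤ := ENNReal.mul_lt_top ENNReal.ofReal_lt_top hInt.lintegral_lt_top
end
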